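/- For every integer m ≥ 1, Σ_{π∈P({1,…,m})} ∏_{S∈π} |S|! ≤ m! · e^m, where the sum runs over all partitions π of the set {1,…,m} into nonempty blocks and |S| denotes the cardinality of the block S. -/

import Mathlib

namespace Clustering

/-- The finset of set partitions of a finset `s` into nonempty blocks. -/
def partitionsOf {ι : Type*} [DecidableEq ι] (s : Finset ι) : Finset (Finset (Finset ι)) :=
  s.powerset.powerset.filter fun P =>
    P.sup id = s ∧ (∅ : Finset ι) ∉ P ∧ ∀ A ∈ P, ∀ B ∈ P, A ≠ B → Disjoint A B

open Finset

variable {ι : Type*} [DecidableEq ι]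

lemma mem_partitionsOf {s : Finset ι} {P : Finset (Finset ι)} :
    P ∈ partitionsOf s ↔ P.sup id = s ∧ (∅ : Finset ι) ∉ P ∧
      ∀ A ∈ P, ∀ B ∈ P, A ≠ B → Disjoint A B := by
  constructor
  · intro h; exact (Finset.mem_filter.mp h).2
  · intro h
    refine Finset.mem_filter.mpr ⟨?_, h⟩
    rw [Finset.mem_powerset]
    intro S hS
    rw [Finset.mem_powerset]
    calc S = id S := rfl
    _ ⊆ P.sup id := Finset.le_sup hS
    _ = s := h.1

/-- The block of a "partition" `P` containing `a`. -/
def blockOf (P : Finset (Finset ι)) (a : ι) : Finset ι :=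
  (P.filter fun S => a ∈ S).sup id

lemma blockOf_eq {P : Finset (Finset ι)}
    (hdis : ∀ A ∈ P, ∀ B ∈ P, A ≠ B → Disjoint A B)
    {T : Finset ι} (hT : T ∈ P) {a : ι} (haT : a ∈ T) : blockOf P a = T := by
  unfold blockOf
  have h : P.filter (fun S => a ∈ S) = {T} := by
    ext S
    simp only [Finset.mem_filter, Finset.mem_singleton]
    constructor
    · rintro ⟨hS, haS⟩
      by_contra hne
      exact (Finset.disjoint_left.mp (hdis S hS T hT hne)) haS haT
    · rintro rfl; exact ⟨hT, haT⟩
  rw [h, Finset.sup_singleton]; rfl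

lemma blockOf_spec {s : Finset ι} {P : Finset (Finset ι)} (hP : P ∈ partitionsOf s)
    {a : ι} (ha : a ∈ s) : blockOf P a ∈ P ∧ a ∈ blockOf P a := by
  obtain ⟨hsup, _, hdis⟩ := mem_partitionsOf.mp hP
  have ha' : a ∈ P.sup id := by rw [hsup]; exact ha
  obtain ⟨T, hT, haT⟩ := Finset.mem_sup.mp ha'
  rw [blockOf_eq hdis hT haT]
  exact ⟨hT, haT⟩

lemma block_subset {s : Finset ι} {P : Finset (Finset ι)} (hP : P ∈ partitionsOf s)
    {T : Finset ι} (hT : T ∈ P) : T ⊆ s := by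
  obtain ⟨hsup, _, _⟩ := mem_partitionsOf.mp hP
  calc T = id T := rfl
  _ ⊆ P.sup id := Finset.le_sup hT
  _ = s := hsup

lemma erase_mem_partitionsOf {s : Finset ι} {P : Finset (Finset ι)} (hP : P ∈ partitionsOf s)
    {T : Finset ι} (hT : T ∈ P) : P.erase T ∈ partitionsOf (s \ T) := by
  obtain ⟨hsup, hne, hdis⟩ := mem_partitionsOf.mp hP
  refine mem_partitionsOf.mpr ⟨?_, fun h => hne (Finset.mem_of_mem_erase h), ?_⟩
  · ext x
    rw [Finset.mem_sup]
    constructor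
    · rintro ⟨S, hS, hxS⟩
      have hSP := Finset.mem_of_mem_erase hS
      have hST : S ≠ T := Finset.ne_of_mem_erase hS
      refine Finset.mem_sdiff.mpr ⟨block_subset hP hSP hxS, fun hxT => ?_⟩
      exact (Finset.disjoint_left.mp (hdis S hSP T hT hST)) hxS hxT
    · intro hx
      obtain ⟨hxs, hxT⟩ := Finset.mem_sdiff.mp hx
      have hx' : x ∈ P.sup id := by rw [hsup]; exact hxs
      obtain ⟨S, hS, hxS⟩ := Finset.mem_sup.mp hx'
      have hST : S ≠ T := fun h => hxT (h ▸ hxS)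
      exact ⟨S, Finset.mem_erase.mpr ⟨hST, hS⟩, hxS⟩
  · intro A hA B hB hAB
    exact hdis A (Finset.mem_of_mem_erase hA) B (Finset.mem_of_mem_erase hB) hAB

lemma insert_mem_partitionsOf {s T : Finset ι} (hTs : T ⊆ s) (hTne : T.Nonempty)
    {Q : Finset (Finset ι)} (hQ : Q ∈ partitionsOf (s \ T)) :
    insert T Q ∈ partitionsOf s := by
  obtain ⟨hsup, hne, hdis⟩ := mem_partitionsOf.mp hQ
  have hQsub : ∀ S ∈ Q, S ⊆ s \ T := fun S hS => block_subset hQ hS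
  refine mem_partitionsOf.mpr ⟨?_, ?_, ?_⟩
  · rw [Finset.sup_insert, hsup]
    show T ∪ (s \ T) = s
    exact Finset.union_sdiff_of_subset hTs
  · intro h
    rcases Finset.mem_insert.mp h with h | h
    · exact hTne.ne_empty h.symm
    · exact hne h
  · intro A hA B hB hAB
    rcases Finset.mem_insert.mp hA with rfl | hA'
    · rcases Finset.mem_insert.mp hB with rfl | hB'
      · exact absurd rfl hAB
      · exact Finset.disjoint_right.mpr fun x hxB =>
          (Finset.mem_sdiff.mp (hQsub B hB' hxB)).2
    · rcases Finset.mem_insert.mp hB with rfl | hB'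
      · exact Finset.disjoint_left.mpr fun x hxA =>
          (Finset.mem_sdiff.mp (hQsub A hA' hxA)).2
      · exact hdis A hA' B hB' hAB

/-- The key recurrence: split off the block containing `a`. -/
lemma partition_sum_rec {s : Finset ι} {a : ι} (ha : a ∈ s) :
    (∑ P ∈ partitionsOf s, ∏ S ∈ P, Nat.factorial S.card)
      = ∑ T ∈ s.powerset.filter (fun T => a ∈ T),
          Nat.factorial T.card * ∑ Q ∈ partitionsOf (s \ T), ∏ S ∈ Q, Nat.factorial S.card := by
  simp_rw [Finset.mul_sum]
  rw [Finset.sum_sigma']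
  refine Finset.sum_nbij' (fun P => ⟨blockOf P a, P.erase (blockOf P a)⟩)
    (fun x => insert x.1 x.2) ?_ ?_ ?_ ?_ ?_
  · intro P hP
    obtain ⟨hT, haT⟩ := blockOf_spec hP ha
    refine Finset.mem_sigma.mpr ⟨?_, erase_mem_partitionsOf hP hT⟩
    exact Finset.mem_filter.mpr ⟨Finset.mem_powerset.mpr (block_subset hP hT), haT⟩
  · rintro ⟨T, Q⟩ hx
    obtain ⟨hT, hQ⟩ := Finset.mem_sigma.mp hx
    obtain ⟨hTs, haT⟩ := Finset.mem_filter.mp hT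
    exact insert_mem_partitionsOf (Finset.mem_powerset.mp hTs) ⟨a, haT⟩ hQ
  · intro P hP
    obtain ⟨hT, _⟩ := blockOf_spec hP ha
    exact Finset.insert_erase hT
  · rintro ⟨T, Q⟩ hx
    obtain ⟨hT, hQ⟩ := Finset.mem_sigma.mp hx
    obtain ⟨hTs, haT⟩ := Finset.mem_filter.mp hT
    have hTs' := Finset.mem_powerset.mp hTs
    have hins := insert_mem_partitionsOf hTs' ⟨a, haT⟩ hQ
    obtain ⟨_, _, hdis⟩ := mem_partitionsOf.mp hins
    have hblock : blockOf (insert T Q) a = T :=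
      blockOf_eq hdis (Finset.mem_insert_self T Q) haT
    have hTQ : T ∉ Q := by
      intro hTQ
      have := block_subset hQ hTQ haT
      exact (Finset.mem_sdiff.mp this).2 haT
    have : (insert T Q).erase (blockOf (insert T Q) a) = Q := by
      rw [hblock, Finset.erase_insert hTQ]
    exact Sigma.ext hblock (heq_of_eq this)
  · intro P hP
    obtain ⟨hT, _⟩ := blockOf_spec hP ha
    exact (Finset.mul_prod_erase P (fun S => Nat.factorial S.card) hT).symm

lemma key_bound : ∀ n : ℕ, ∀ s : Finset ι, s.card = n →
    ((∑ P ∈ partitionsOf s, ∏ S ∈ P, Nat.factorial S.card : ℕ) : ℝ)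
      ≤ (Nat.factorial n : ℝ) * Real.exp 1 ^ n := by
  intro n
  induction n using Nat.strong_induction_on with
  | _ n ih =>
    intro s hs
    rcases s.eq_empty_or_nonempty with rfl | ⟨a, ha⟩
    · simp only [Finset.card_empty] at hs
      subst hs
      have hpe : partitionsOf (∅ : Finset ι) = {∅} := by
        ext P
        rw [mem_partitionsOf]
        simp only [Finset.mem_singleton]
        constructor
        · rintro ⟨hsup, hne, _⟩
          by_contra hP
          obtain ⟨S, hS⟩ := Finset.nonempty_iff_ne_empty.mpr hP
          have hSe : S = ∅ := by
            have : S ⊆ P.sup id := Finset.le_sup (f := id) hS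
            rw [hsup] at this
            exact Finset.subset_empty.mp this
          exact hne (hSe ▸ hS)
        · rintro rfl
          exact ⟨rfl, Finset.notMem_empty _, fun A hA => absurd hA (Finset.notMem_empty _)⟩
      rw [hpe]
      simp [Nat.factorial]
    · -- nonempty case
      have hn : 0 < n := hs ▸ Finset.card_pos.mpr ⟨a, ha⟩
      set g : ℕ → ℝ := fun c =>
        (Nat.factorial c : ℝ) * ((Nat.factorial (n - c) : ℝ) * Real.exp 1 ^ (n - c)) with hg
      have step1 : ((∑ P ∈ partitionsOf s, ∏ S ∈ P, Nat.factorial S.card : ℕ) : ℝ)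
          ≤ ∑ T ∈ s.powerset.filter (fun T => a ∈ T), g T.card := by
        rw [partition_sum_rec ha, Nat.cast_sum]
        apply Finset.sum_le_sum
        intro T hT
        rw [Nat.cast_mul]
        obtain ⟨hTs, haT⟩ := Finset.mem_filter.mp hT
        have hTs' := Finset.mem_powerset.mp hTs
        have hTcard : 0 < T.card := Finset.card_pos.mpr ⟨a, haT⟩
        have hTle : T.card ≤ n := hs ▸ Finset.card_le_card hTs'
        have hcard : (s \ T).card = n - T.card := by rw [Finset.card_sdiff_of_subset hTs', hs]
        have hlt : n - T.card < n := by omega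
        exact mul_le_mul_of_nonneg_left (ih _ hlt _ hcard) (by positivity)
      have step2 : ∑ T ∈ s.powerset.filter (fun T => a ∈ T), g T.card
          = ∑ U ∈ (s.erase a).powerset, g (U.card + 1) := by
        refine Finset.sum_nbij' (fun T => T.erase a) (fun U => insert a U) ?_ ?_ ?_ ?_ ?_
        · intro T hT
          obtain ⟨hTs, _⟩ := Finset.mem_filter.mp hT
          exact Finset.mem_powerset.mpr
            (Finset.erase_subset_erase a (Finset.mem_powerset.mp hTs))
        · intro U hU
          have hU' := Finset.mem_powerset.mp hU
          refine Finset.mem_filter.mpr ⟨Finset.mem_powerset.mpr ?_, Finset.mem_insert_self a U⟩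
          exact Finset.insert_subset ha (hU'.trans (Finset.erase_subset a s))
        · intro T hT
          exact Finset.insert_erase (Finset.mem_filter.mp hT).2
        · intro U hU
          have hU' := Finset.mem_powerset.mp hU
          exact Finset.erase_insert (fun h => (Finset.mem_erase.mp (hU' h)).1 rfl)
        · intro T hT
          have haT := (Finset.mem_filter.mp hT).2
          rw [Finset.card_erase_add_one haT]
      have hcardA : (s.erase a).card = n - 1 := by rw [Finset.card_erase_of_mem ha, hs]
      have step3 : ∑ U ∈ (s.erase a).powerset, g (U.card + 1)
          = ∑ j ∈ Finset.range n, (n - 1).choose j • g (j + 1) := by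
        rw [Finset.sum_powerset]
        have hr : (s.erase a).card + 1 = n := by omega
        rw [hr]
        refine Finset.sum_congr rfl fun j _ => ?_
        rw [Finset.sum_powersetCard j (s.erase a) (fun c => g (c + 1)), hcardA]
      have step4 : ∀ j ∈ Finset.range n,
          (n - 1).choose j • g (j + 1)
            ≤ (Nat.factorial (n - 1) : ℝ) * Real.exp 1 ^ n := by
        intro j hj
        have hjn : j < n := Finset.mem_range.mp hj
        have hjle : j ≤ n - 1 := by omega
        have hnj : n - (j + 1) = (n - 1) - j := by omega
        have hfact : (n - 1).choose j * Nat.factorial (j + 1) * Nat.factorial ((n - 1) - j)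
            = (j + 1) * Nat.factorial (n - 1) := by
          rw [Nat.factorial_succ]
          rw [show (n-1).choose j * ((j + 1) * Nat.factorial j) * Nat.factorial ((n-1) - j)
              = (j + 1) * ((n-1).choose j * Nat.factorial j * Nat.factorial ((n-1) - j)) by ring]
          rw [Nat.choose_mul_factorial_mul_factorial hjle]
        rw [nsmul_eq_mul, hg]
        simp only [hnj]
        have hexp : ((j : ℝ) + 1) * Real.exp 1 ^ ((n - 1) - j) ≤ Real.exp 1 ^ n := by
          have h1 : ((j : ℝ) + 1) ≤ Real.exp 1 ^ (j + 1) := by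
            rw [Real.exp_one_pow]
            push_cast
            calc ((j : ℝ) + 1) ≤ Real.exp j := Real.add_one_le_exp j
            _ ≤ Real.exp ((j : ℝ) + 1) := Real.exp_le_exp.mpr (by linarith)
          calc ((j : ℝ) + 1) * Real.exp 1 ^ ((n - 1) - j)
              ≤ Real.exp 1 ^ (j + 1) * Real.exp 1 ^ ((n - 1) - j) :=
                mul_le_mul_of_nonneg_right h1 (by positivity)
          _ = Real.exp 1 ^ ((j + 1) + ((n - 1) - j)) := (pow_add _ _ _).symm
          _ = Real.exp 1 ^ n := by congr 1; omega
        calc ((n - 1).choose j : ℝ) *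
              ((Nat.factorial (j + 1) : ℝ) *
                ((Nat.factorial ((n - 1) - j) : ℝ) * Real.exp 1 ^ ((n - 1) - j)))
            = (((n - 1).choose j * Nat.factorial (j + 1) * Nat.factorial ((n - 1) - j) : ℕ) : ℝ)
                * Real.exp 1 ^ ((n - 1) - j) := by push_cast; ring
        _ = (((j + 1) * Nat.factorial (n - 1) : ℕ) : ℝ) * Real.exp 1 ^ ((n - 1) - j) := by
              rw [hfact]
        _ = (Nat.factorial (n - 1) : ℝ) * (((j : ℝ) + 1) * Real.exp 1 ^ ((n - 1) - j)) := by
              push_cast; ring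
        _ ≤ (Nat.factorial (n - 1) : ℝ) * Real.exp 1 ^ n :=
              mul_le_mul_of_nonneg_left hexp (by positivity)
      calc ((∑ P ∈ partitionsOf s, ∏ S ∈ P, Nat.factorial S.card : ℕ) : ℝ)
          ≤ ∑ j ∈ Finset.range n, (n - 1).choose j • g (j + 1) := by
            rw [← step3, ← step2]; exact step1
      _ ≤ (Finset.range n).card • ((Nat.factorial (n - 1) : ℝ) * Real.exp 1 ^ n) :=
            Finset.sum_le_card_nsmul _ _ _ step4
      _ = (n : ℝ) * ((Nat.factorial (n - 1) : ℝ) * Real.exp 1 ^ n) := by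
            rw [Finset.card_range, nsmul_eq_mul]
      _ = ((n * Nat.factorial (n - 1) : ℕ) : ℝ) * Real.exp 1 ^ n := by push_cast; ring
      _ = (Nat.factorial n : ℝ) * Real.exp 1 ^ n := by rw [Nat.mul_factorial_pred hn.ne']

/-- **Combinatorial estimate (4.20).** For every `m ≥ 1`,
`Σ_{π∈P({1,…,m})} ∏_{S∈π} |S|! ≤ m!·e^m`. -/
theorem partition_factorial_sum_le (m : ℕ) (hm : 1 ≤ m) :
    ((∑ P ∈ partitionsOf (Finset.univ : Finset (Fin m)),
        ∏ S ∈ P, Nat.factorial S.card : ℕ) : ℝ)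
      ≤ (Nat.factorial m : ℝ) * Real.exp 1 ^ m := by
  exact key_bound m Finset.univ (by simp)

end Clustering
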